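/- Let λ, μ ∈ ℂ, let b₋ < b₊ be positive integers with b₋ + b₊ ≤ N + 1, and let A ∈ Mat_N(ℂ) be the Type-1 matrix: A^i_i = λ + μ for 1 ≤ i ≤ b₋, A^i_i = λ for b₋ < i < b₊, A^i_i = 0 for b₊ ≤ i ≤ N; A^{σ(j)}_j = y_j for j ∈ Y = [1,b₋] ∪ [b₊, b₊+b₋−1] where σ(j) = b₊ + b₋ − j and y_j y_{σ(j)} = −λμ ≠ 0; all other entries zero. Then A satisfies the cubic equation A(A − λ)(A − μ) = 0. -/

import Mathlib

open Matrix

/-- Membership of a 1-based label `k` in `Y = [1,b₋] ∪ [b₊, b₊+b₋−1]`. -/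
def inY1 (bm bp k : ℕ) : Prop := (1 ≤ k ∧ k ≤ bm) ∨ (bp ≤ k ∧ k ≤ bp + bm - 1)

instance (bm bp k : ℕ) : Decidable (inY1 bm bp k) := by unfold inY1; infer_instance

/-- The Type-1 matrix (1-based labels `i+1`, `j+1` for `i j : Fin N`):
diagonal `λ+μ` on `[1,b₋]`, `λ` on `(b₋,b₊)`, `0` on `[b₊,N]`; off-diagonal
entries `y_j` at positions `(σ(j), j)` with `σ(j) = b₊+b₋−j` for `j ∈ Y`. -/
noncomputable def typeOne (N bm bp : ℕ) (lam mu : ℂ) (y : ℕ → ℂ) :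
    Matrix (Fin N) (Fin N) ℂ :=
  fun i j =>
    if i = j then
      (if (j : ℕ) + 1 ≤ bm then lam + mu
       else if (j : ℕ) + 1 < bp then lam else 0)
    else if ((i : ℕ) + 1) + ((j : ℕ) + 1) = bp + bm ∧ inY1 bm bp ((j : ℕ) + 1)
      then y ((j : ℕ) + 1) else 0

section Aux

variable (N bm bp : ℕ) (lam mu : ℂ) (y : ℕ → ℂ)

lemma typeOne_diag (i : Fin N) :
    typeOne N bm bp lam mu y i i =
      if (i : ℕ) + 1 ≤ bm then lam + mu
      else if (i : ℕ) + 1 < bp then lam else 0 := by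
  simp [typeOne]

lemma mul_row_notY {i : Fin N} (hi : ¬ inY1 bm bp ((i : ℕ) + 1))
    (B : Matrix (Fin N) (Fin N) ℂ) (j : Fin N) :
    (typeOne N bm bp lam mu y * B) i j =
      typeOne N bm bp lam mu y i i * B i j := by
  rw [mul_apply, Finset.sum_eq_single i]
  · intro k _ hk
    have hz : typeOne N bm bp lam mu y i k = 0 := by
      unfold typeOne
      rw [if_neg (fun h => hk h.symm), if_neg]
      rintro ⟨h1, h2⟩
      exact hi (by unfold inY1 at h2 ⊢; omega)
    rw [hz, zero_mul]
  · intro h; exact absurd (Finset.mem_univ i) h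

lemma mul_row_Y (hbm : 1 ≤ bm) (hb : bm < bp) {i s : Fin N}
    (hi : inY1 bm bp ((i : ℕ) + 1))
    (hs : ((i : ℕ) + 1) + ((s : ℕ) + 1) = bp + bm)
    (B : Matrix (Fin N) (Fin N) ℂ) (j : Fin N) :
    (typeOne N bm bp lam mu y * B) i j =
      typeOne N bm bp lam mu y i i * B i j + y ((s : ℕ) + 1) * B s j := by
  have hne : i ≠ s := by
    intro h
    rw [h] at hs hi
    unfold inY1 at hi; omega
  have hsY : inY1 bm bp ((s : ℕ) + 1) := by unfold inY1 at hi ⊢; omega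
  have hAis : typeOne N bm bp lam mu y i s = y ((s : ℕ) + 1) := by
    unfold typeOne
    rw [if_neg hne, if_pos ⟨hs, hsY⟩]
  rw [mul_apply]
  have hz : ∀ k ∈ (Finset.univ : Finset (Fin N)),
      k ∉ ({i, s} : Finset (Fin N)) →
      typeOne N bm bp lam mu y i k * B k j = 0 := by
    intro k _ hk
    simp only [Finset.mem_insert, Finset.mem_singleton, not_or] at hk
    have hz : typeOne N bm bp lam mu y i k = 0 := by
      unfold typeOne
      rw [if_neg (fun h => hk.1 h.symm), if_neg]
      rintro ⟨h1, h2⟩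
      exact hk.2 (Fin.ext (by omega))
    rw [hz, zero_mul]
  rw [← Finset.sum_subset (Finset.subset_univ {i, s}) hz, Finset.sum_pair hne, hAis]

end Aux

/-- a Type-1 matrix satisfies the cubic `A(A − λ)(A − μ) = 0`. -/
theorem typeOne_cubic (N bm bp : ℕ) (hN : 1 ≤ N)
    (hbm : 1 ≤ bm) (hb : bm < bp) (hbN : bm + bp ≤ N + 1)
    (lam mu : ℂ) (hlm : lam * mu ≠ 0) (y : ℕ → ℂ)
    (hy : ∀ k, inY1 bm bp k → y k * y (bp + bm - k) = -(lam * mu))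
    (hynz : ∀ k, inY1 bm bp k → y k ≠ 0) :
    typeOne N bm bp lam mu y *
      (typeOne N bm bp lam mu y - lam • (1 : Matrix (Fin N) (Fin N) ℂ)) *
      (typeOne N bm bp lam mu y - mu • (1 : Matrix (Fin N) (Fin N) ℂ)) = 0 := by
  set A := typeOne N bm bp lam mu y with hA
  have expand : A * (A - lam • 1) * (A - mu • 1)
      = A * (A * A) - (lam + mu) • (A * A) + (lam * mu) • A := by
    simp only [mul_sub, sub_mul, smul_mul_assoc, mul_smul_comm, mul_one, one_mul,
      smul_smul, mul_assoc]
    module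
  rw [expand]
  ext i j
  simp only [Matrix.sub_apply, Matrix.add_apply, Matrix.smul_apply, smul_eq_mul, Matrix.zero_apply]
  by_cases hi : inY1 bm bp ((i : ℕ) + 1)
  · obtain ⟨s, hs⟩ : ∃ s : Fin N, ((i : ℕ) + 1) + ((s : ℕ) + 1) = bp + bm := by
      refine ⟨⟨bp + bm - ((i : ℕ) + 1) - 1, ?_⟩, ?_⟩ <;>
        (unfold inY1 at hi; first | omega | (simp only [Fin.val_mk]; omega))
    have hsY : inY1 bm bp ((s : ℕ) + 1) := by unfold inY1 at hi ⊢; omega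
    have hsi : ((s : ℕ) + 1) + ((i : ℕ) + 1) = bp + bm := by omega
    have h1 : (A * (A * A)) i j = A i i * (A * A) i j + y ((s : ℕ) + 1) * (A * A) s j :=
      mul_row_Y N bm bp lam mu y hbm hb hi hs _ j
    have h2 : (A * A) i j = A i i * A i j + y ((s : ℕ) + 1) * A s j :=
      mul_row_Y N bm bp lam mu y hbm hb hi hs _ j
    have h3 : (A * A) s j = A s s * A s j + y ((i : ℕ) + 1) * A i j :=
      mul_row_Y N bm bp lam mu y hbm hb hsY hsi _ j
    have hyy : y ((s : ℕ) + 1) * y ((i : ℕ) + 1) = -(lam * mu) := by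
      have h := hy ((s : ℕ) + 1) hsY
      have he : bp + bm - ((s : ℕ) + 1) = (i : ℕ) + 1 := by omega
      rwa [he] at h
    have hd : (A i i = lam + mu ∧ A s s = 0) ∨ (A i i = 0 ∧ A s s = lam + mu) := by
      rw [hA, typeOne_diag, typeOne_diag]
      unfold inY1 at hi
      rcases hi with h | h
      · left
        rw [if_pos (by omega), if_neg (by omega), if_neg (by omega)]
        exact ⟨rfl, rfl⟩
      · right
        rw [if_neg (by omega), if_neg (by omega), if_pos (by omega)]
        exact ⟨rfl, rfl⟩
    rw [h1, h2, h3]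
    rcases hd with ⟨e1, e2⟩ | ⟨e1, e2⟩ <;> rw [e1, e2] <;>
      linear_combination A i j * hyy
  · have h1 : (A * (A * A)) i j = A i i * (A * A) i j :=
      mul_row_notY N bm bp lam mu y hi _ j
    have h2 : (A * A) i j = A i i * A i j :=
      mul_row_notY N bm bp lam mu y hi _ j
    rw [h1, h2]
    by_cases hlt : (i : ℕ) + 1 < bp
    · have hd : A i i = lam := by
        rw [hA, typeOne_diag, if_neg (by unfold inY1 at hi; omega), if_pos hlt]
      rw [hd]; ring
    · have hd : A i i = 0 := by
        rw [hA, typeOne_diag, if_neg (by unfold inY1 at hi; omega), if_neg hlt]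
      have hz : A i j = 0 := by
        by_cases hji : i = j
        · rw [← hji, hd]
        · rw [hA]
          unfold typeOne
          rw [if_neg hji, if_neg]
          rintro ⟨ha, hb2⟩
          exact hi (by unfold inY1 at hb2 ⊢; omega)
      rw [hd, hz]; ring
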